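/- Let G be an acyclic graph and let X, Y be sets of directed edges of G that are each consistent and downward closed under ≺. Then Y ∪ (X ∖ (−Y)) is consistent and downward closed under ≺. -/

import Mathlib

namespace Paper

variable {X Y : Type*}

/-- A (simple, undirected) graph on `X`: a symmetric irreflexive set of ordered pairs. -/
def IsGraph (G : Set (X × X)) : Prop :=
  (∀ x y, (x, y) ∈ G → (y, x) ∈ G) ∧ ∀ x, (x, x) ∉ G

/-- Connectedness (same component) relation of a graph. -/
def Conn (G : Set (X × X)) : X → X → Prop :=
  Relation.ReflTransGen fun x y => (x, y) ∈ G

/-- The reversal of a directed edge. -/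
def neg (e : X × X) : X × X := (e.2, e.1)

end Paper
namespace Paper

variable {X Y : Type*}

/-- A (simple, directed) path in a graph, as a nonempty list of distinct
consecutively-adjacent vertices. -/
def IsPathL (G : Set (X × X)) (p : List X) : Prop :=
  p ≠ [] ∧ p.Nodup ∧ p.Chain' fun a b => (a, b) ∈ G

/-- A straight line (segment): a directed path such that no other path of the same
or shorter length has the same endpoints. -/
def IsStraight (G : Set (X × X)) (p : List X) : Prop :=
  IsPathL G p ∧ ∀ q : List X, IsPathL G q → q.head? = p.head? →
    q.getLast? = p.getLast? → q.length ≤ p.length → q = p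

/-- The directed edges `e` and `e'` lie on a common straight line. -/
def OnLine (G : Set (X × X)) (e e' : X × X) : Prop :=
  ∃ p, IsStraight G p ∧ [e.1, e.2] <:+: p ∧ [e'.1, e'.2] <:+: p

/-- The vertices `x` and `y` lie on a common straight line. -/
def VertsOnLine (G : Set (X × X)) (x y : X) : Prop :=
  ∃ p, IsStraight G p ∧ x ∈ p ∧ y ∈ p

/-- A rectangle: a simple directed cycle divided into 4 straight lines. -/
def IsRect (G : Set (X × X)) (p₁ p₂ p₃ p₄ : List X) : Prop :=
  IsStraight G p₁ ∧ IsStraight G p₂ ∧ IsStraight G p₃ ∧ IsStraight G p₄ ∧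
  p₁.getLast? = p₂.head? ∧ p₂.getLast? = p₃.head? ∧
  p₃.getLast? = p₄.head? ∧ p₄.getLast? = p₁.head? ∧
  (p₁ ++ p₂.tail ++ p₃.tail ++ p₄.tail).dropLast.Nodup

/-- `e ∥ e'`: the directed edges lie on a common straight line, or `-e` and `e'`
are opposite sides of a rectangle. -/
def Parallel (G : Set (X × X)) (e e' : X × X) : Prop :=
  OnLine G e e' ∨
  ∃ p₁ p₂ p₃ p₄, IsRect G p₁ p₂ p₃ p₄ ∧
    (([e.2, e.1] <:+: p₁ ∧ [e'.1, e'.2] <:+: p₃) ∨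
     ([e.2, e.1] <:+: p₃ ∧ [e'.1, e'.2] <:+: p₁) ∨
     ([e.2, e.1] <:+: p₂ ∧ [e'.1, e'.2] <:+: p₄) ∨
     ([e.2, e.1] <:+: p₄ ∧ [e'.1, e'.2] <:+: p₂))

/-- `e ⊥ e'`: directed edges of `G` in the same component which are neither
parallel nor anti-parallel. -/
def Perp (G : Set (X × X)) (e e' : X × X) : Prop :=
  e ∈ G ∧ e' ∈ G ∧ Conn G e.1 e'.1 ∧ ¬ Parallel G e e' ∧ ¬ Parallel G (neg e) e'

/-- Adjacency in the Cayley graph of `ℤ²` with the standard generating set. -/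
def LatAdj (p q : ℤ × ℤ) : Prop :=
  q = p + (1, 0) ∨ q = p + (-1, 0) ∨ q = p + (0, 1) ∨ q = p + (0, -1)

/-- A graph is locally a square lattice if every connected component is
isomorphic to the Cayley graph of `ℤ²` with the standard generating set. -/
def LocallySquareLattice (G : Set (X × X)) : Prop :=
  ∀ x : X, ∃ φ : ℤ × ℤ → X, Function.Injective φ ∧ φ 0 = x ∧
    (∀ p q, LatAdj p q ↔ (φ p, φ q) ∈ G) ∧
    ∀ y, Conn G x y → ∃ p, φ p = y

/-- A Borel 2-coloring of the perpendicularity graph `⊥_G`. -/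
def HasBorelTwoColoring [MeasurableSpace X] (G : Set (X × X)) : Prop :=
  ∃ c : X × X → Bool, Measurable c ∧ ∀ e e', Perp G e e' → c e ≠ c e'

/-- The standard generating set of `ℤ²`. -/
def stdGen : Set (ℤ × ℤ) := {(1, 0), (-1, 0), (0, 1), (0, -1)}

/-- `G` is the Schreier graph of a free Borel action of `ℤ²` (with the standard
generating set). -/
def IsSchreierZ2 [MeasurableSpace X] (G : Set (X × X)) : Prop :=
  ∃ a : ℤ × ℤ → X → X,
    (∀ g, Measurable (a g)) ∧
    (∀ x, a 0 x = x) ∧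
    (∀ g h x, a (g + h) x = a g (a h x)) ∧
    (∀ g x, a g x = x → g = 0) ∧
    G = {p | ∃ g ∈ stdGen, p.2 = a g p.1}

end Paper
namespace Paper

variable {X : Type*}

/-- `G` is acyclic: there is no simple cycle (of length at least 3). -/
def Acyclic (G : Set (X × X)) : Prop :=
  ¬ ∃ (x : X) (p : List X), 2 ≤ p.length ∧ (x :: p).Nodup ∧
      ((x :: p).Chain' fun a b => (a, b) ∈ G) ∧
      ((x :: p).getLast (List.cons_ne_nil x p), x) ∈ G

/-- `e P y`: `y` and `e₀` are in the same component and the (unique) simple path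
from `e₀` to `y` goes through `e₁`. -/
def PointsTo (G : Set (X × X)) (e : X × X) (y : X) : Prop :=
  ∃ p : List X, IsPathL G p ∧ p.head? = some e.1 ∧ p.getLast? = some y ∧ e.2 ∈ p

/-- `e I e'`. -/
def Interferes (G : Set (X × X)) (e e' : X × X) : Prop :=
  e ≠ e' ∧ Conn G e.1 e'.1 ∧ ¬ PointsTo G e e'.1 ∧ ¬ PointsTo G e' e.1

/-- A set of directed edges is consistent if no two of its members satisfy `I`. -/
def Consistent (G : Set (X × X)) (A : Set (X × X)) : Prop :=
  ∀ e ∈ A, ∀ e' ∈ A, ¬ Interferes G e e'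

/-- `e ≺ e'`: `e P e'₀` but not `e' P e₀`. -/
def EdgePrec (G : Set (X × X)) (e e' : X × X) : Prop :=
  PointsTo G e e'.1 ∧ ¬ PointsTo G e' e.1

/-- `A` is downward closed under `≺`. -/
def PrecClosed (G : Set (X × X)) (A : Set (X × X)) : Prop :=
  ∀ e e', EdgePrec G e e' → e' ∈ A → e ∈ A

end Paper

open Paper

section Aux

variable {X : Type*} {G : Set (X × X)}

private lemma symmG (hG : IsGraph G) {a b : X} (h : (a, b) ∈ G) : (b, a) ∈ G := hG.1 a b h

private lemma neG (hG : IsGraph G) {a b : X} (h : (a, b) ∈ G) : a ≠ b := by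
  rintro rfl; exact hG.2 a h

private lemma mem_getLast? {l : List X} {y : X} (h : l.getLast? = some y) : y ∈ l := by
  cases l with
  | nil => simp at h
  | cons a l =>
    rw [List.getLast?_eq_getLast (List.cons_ne_nil a l)] at h
    exact (Option.some.injEq _ _ ▸ h) ▸ List.getLast_mem _

private lemma head?_of_prefix {p q : List X} (h : p <+: q) (hp : p ≠ []) :
    q.head? = p.head? := by
  obtain ⟨r, rfl⟩ := h
  exact List.head?_append_of_ne_nil _ hp

private lemma path_singleton (x : X) : IsPathL G [x] := ⟨by simp, by simp, List.isChain_singleton _⟩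

private lemma path_reverse (hG : IsGraph G) {p : List X} (hp : IsPathL G p) :
    IsPathL G p.reverse :=
  ⟨by simpa using hp.1, (List.nodup_reverse.mpr hp.2.1), by
    show List.IsChain _ _; rw [List.isChain_reverse]; exact hp.2.2.imp fun a b h => hG.1 a b h⟩

private lemma path_take {p₁ p₂ : List X} {y : X} (hp : IsPathL G (p₁ ++ y :: p₂)) :
    IsPathL G (p₁ ++ [y]) := by
  have hpre : (p₁ ++ [y]) <+: (p₁ ++ y :: p₂) := ⟨p₂, by simp⟩
  exact ⟨by simp, hp.2.1.sublist hpre.sublist, hp.2.2.prefix hpre⟩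

private lemma path_drop {p₁ p₂ : List X} {y : X} (hp : IsPathL G (p₁ ++ y :: p₂)) :
    IsPathL G (y :: p₂) := by
  have hsuf : (y :: p₂) <:+ (p₁ ++ y :: p₂) := ⟨p₁, rfl⟩
  exact ⟨by simp, hp.2.1.sublist hsuf.sublist, hp.2.2.suffix hsuf⟩

private lemma conn_of_path : ∀ {p : List X}, (p.Chain' fun a b => (a, b) ∈ G) →
    ∀ {x y : X}, p.head? = some x → p.getLast? = some y → Conn G x y := by
  intro p
  induction p with
  | nil => intro _ x y h; simp at h
  | cons a q ih =>
    intro hc x y hx hy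
    obtain rfl : a = x := by simpa using hx
    cases q with
    | nil =>
      obtain rfl : a = y := by simpa using hy
      exact Relation.ReflTransGen.refl
    | cons b r =>
      change List.IsChain _ _ at hc
      rw [List.isChain_cons_cons] at hc
      exact Relation.ReflTransGen.head hc.1 (ih hc.2 rfl (by simpa using hy))

private lemma conn_of_mem {p : List X} (hc : p.Chain' fun a b => (a, b) ∈ G)
    {x y : X} (hx : p.head? = some x) (hy : y ∈ p) : Conn G x y := by
  obtain ⟨p₁, p₂, rfl⟩ := List.append_of_mem hy
  have hpre : (p₁ ++ [y]) <+: (p₁ ++ y :: p₂) := ⟨p₂, by simp⟩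
  exact conn_of_path (hc.prefix hpre)
    ((head?_of_prefix hpre (by simp)).symm.trans hx) (by simp)

private lemma exists_path (hG : IsGraph G) {x y : X} (h : Conn G x y) :
    ∃ p, IsPathL G p ∧ p.head? = some x ∧ p.getLast? = some y := by
  induction h with
  | refl => exact ⟨[x], path_singleton x, rfl, rfl⟩
  | @tail b c _ hbc ih =>
    obtain ⟨p, hp, hh, hl⟩ := ih
    by_cases hcp : c ∈ p
    · obtain ⟨p₁, p₂, rfl⟩ := List.append_of_mem hcp
      have hpre : (p₁ ++ [c]) <+: (p₁ ++ c :: p₂) := ⟨p₂, by simp⟩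
      exact ⟨p₁ ++ [c], path_take hp,
        (head?_of_prefix hpre (by simp)).symm.trans hh, by simp⟩
    · refine ⟨p ++ [c], ⟨by simp, ?_, ?_⟩, ?_, ?_⟩
      · rw [List.nodup_append']
        exact ⟨hp.2.1, by simp, by simpa [List.Disjoint] using fun a ha (h : a = c) => hcp (h ▸ ha)⟩
      · show List.IsChain _ _
        rw [List.isChain_append]
        refine ⟨hp.2.2, by simp, ?_⟩
        intro w hw z hz
        rw [hl] at hw
        obtain rfl : b = w := by simpa using hw
        obtain rfl : c = z := by simpa using hz
        exact hbc
      · exact (List.head?_append_of_ne_nil _ hp.1).trans hh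
      · exact List.getLast?_concat

private lemma first_common {s : List X} :
    ∀ {r : List X}, (∃ z ∈ r, z ∈ s) →
      ∃ r₁ z r₂, r = r₁ ++ z :: r₂ ∧ z ∈ s ∧ ∀ w ∈ r₁, w ∉ s := by
  intro r
  induction r with
  | nil => rintro ⟨z, hz, -⟩; simp at hz
  | cons a r ih =>
    intro h
    by_cases ha : a ∈ s
    · exact ⟨[], a, r, rfl, ha, by simp⟩
    · obtain ⟨z, hz, hzs⟩ := h
      have hz' : z ∈ r := by
        rcases List.mem_cons.mp hz with rfl | h'
        · exact absurd hzs ha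
        · exact h'
      obtain ⟨r₁, z', r₂, hq, h1, h2⟩ := ih ⟨z, hz', hzs⟩
      refine ⟨a :: r₁, z', r₂, by rw [hq]; rfl, h1, ?_⟩
      intro w hw
      rcases List.mem_cons.mp hw with rfl | h'
      · exact ha
      · exact h2 w h'

end Aux

section Aux2

variable {X : Type*} {G : Set (X × X)}

private lemma path_unique (hG : IsGraph G) (hacyc : Acyclic G) :
    ∀ (p q : List X), IsPathL G p → IsPathL G q → p.head? = q.head? →
      p.getLast? = q.getLast? → p = q := by
  intro p
  induction p with
  | nil => intro q hp _ _ _; exact absurd rfl hp.1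
  | cons x p' ih =>
    intro q hp hq hh hl
    obtain ⟨q', rfl⟩ : ∃ q', q = x :: q' := by
      cases q with
      | nil => exact absurd rfl hq.1
      | cons z q' =>
        obtain rfl : x = z := by simpa using hh
        exact ⟨q', rfl⟩
    clear hh
    cases p' with
    | nil =>
      cases q' with
      | nil => rfl
      | cons c q'' =>
        exfalso
        have hy : (c :: q'').getLast? = some x := by
          rw [← List.getLast?_cons_cons (a := x)]
          exact hl.symm
        exact (List.nodup_cons.mp hq.2.1).1 (mem_getLast? hy)
    | cons a p'' =>
      cases q' with
      | nil =>
        exfalso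
        have hy : (a :: p'').getLast? = some x := by
          rw [← List.getLast?_cons_cons (a := x)]
          exact hl
        exact (List.nodup_cons.mp hp.2.1).1 (mem_getLast? hy)
      | cons c q'' =>
        by_cases hac : a = c
        · subst hac
          have h1 : IsPathL G (a :: p'') := path_drop (p₁ := [x]) hp
          have h2 : IsPathL G (a :: q'') := path_drop (p₁ := [x]) hq
          have hl' : (a :: p'').getLast? = (a :: q'').getLast? := by
            rw [← List.getLast?_cons_cons (a := x), ← List.getLast?_cons_cons (a := x)]
            exact hl
          rw [ih (a :: q'') h1 h2 rfl hl']
        · exfalso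
          have hpr : IsPathL G (a :: p'') := path_drop (p₁ := [x]) hp
          have hqs : IsPathL G (c :: q'') := path_drop (p₁ := [x]) hq
          have hxr : x ∉ a :: p'' := (List.nodup_cons.mp hp.2.1).1
          have hxs : x ∉ c :: q'' := (List.nodup_cons.mp hq.2.1).1
          have hxa : (x, a) ∈ G := (List.isChain_cons_cons.mp hp.2.2).1
          have hxc : (x, c) ∈ G := (List.isChain_cons_cons.mp hq.2.2).1
          have hyr : (a :: p'').getLast? = (c :: q'').getLast? := by
            rw [← List.getLast?_cons_cons (a := x), ← List.getLast?_cons_cons (a := x)]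
            exact hl
          obtain ⟨y, hy⟩ : ∃ y, (a :: p'').getLast? = some y :=
            ⟨_, List.getLast?_eq_getLast (by simp)⟩
          obtain ⟨r₁, z, r₂, hrsplit, hzs, hr₁⟩ :=
            first_common (s := c :: q'') ⟨y, mem_getLast? hy, mem_getLast? (hyr ▸ hy)⟩
          obtain ⟨s₁, s₂, hssplit⟩ := List.append_of_mem hzs
          -- facts
          have hnr : (r₁ ++ z :: r₂).Nodup := hrsplit ▸ hpr.2.1
          have hns : (s₁ ++ z :: s₂).Nodup := hssplit ▸ hqs.2.1
          have hzr₁ : z ∉ r₁ := fun h =>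
            (List.disjoint_of_nodup_append hnr) h (by simp)
          have hzs₁ : z ∉ s₁ := fun h =>
            (List.disjoint_of_nodup_append hns) h (by simp)
          have hdisj : ∀ w ∈ r₁, w ∉ s₁ := fun w hw hws =>
            hr₁ w hw (hssplit ▸ List.mem_append_left _ hws)
          have hxr₁ : x ∉ r₁ := fun h => hxr (hrsplit ▸ List.mem_append_left _ h)
          have hxz : x ≠ z := fun h => hxs (h ▸ hzs)
          have hxs₁ : x ∉ s₁ := fun h => hxs (hssplit ▸ List.mem_append_left _ h)
          -- the cycle
          refine hacyc ⟨x, r₁ ++ z :: s₁.reverse, ?_, ?_, ?_, ?_⟩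
          · -- length
            have : r₁ ≠ [] ∨ s₁ ≠ [] := by
              by_contra hcon
              push_neg at hcon
              obtain ⟨h1, h2⟩ := hcon
              subst h1; subst h2
              have ha : a = z := by
                have := hrsplit
                simp only [List.nil_append] at this
                exact (List.cons.injEq _ _ _ _ ▸ this).1
              have hc : c = z := by
                have := hssplit
                simp only [List.nil_append] at this
                exact (List.cons.injEq _ _ _ _ ▸ this).1
              exact hac (ha.trans hc.symm)
            rcases this with h | h
            · have := List.length_pos_iff.mpr h
              simp only [List.length_append, List.length_cons]
              omega
            · have := List.length_pos_iff.mpr h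
              simp only [List.length_append, List.length_cons, List.length_reverse]
              omega
          · -- nodup
            rw [List.nodup_cons]
            constructor
            · intro hx
              simp only [List.mem_append, List.mem_cons, List.mem_reverse] at hx
              rcases hx with h | h | h
              · exact hxr₁ h
              · exact hxz h
              · exact hxs₁ h
            · rw [show r₁ ++ z :: s₁.reverse = (r₁ ++ [z]) ++ s₁.reverse by simp,
                List.nodup_append']
              refine ⟨?_, List.nodup_reverse.mpr (List.Nodup.sublist
                (List.sublist_append_left _ _) hns), ?_⟩
              · exact hnr.sublist (show (r₁ ++ [z]) <+: (r₁ ++ z :: r₂) from ⟨r₂, by simp⟩).sublist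
              · intro w hw hws
                rw [List.mem_reverse] at hws
                rcases List.mem_append.mp hw with h | h
                · exact hdisj w h hws
                · obtain rfl : w = z := by simpa using h
                  exact hzs₁ hws
          · -- chain
            have hchain_r : List.Chain' (fun a b => (a, b) ∈ G) (x :: (r₁ ++ [z])) := by
              refine (hrsplit ▸ hp.2.2 : List.Chain' _ (x :: (r₁ ++ z :: r₂))).prefix ?_
              exact ⟨r₂, by simp⟩
            have hcs₁ : List.Chain' (fun a b => (a, b) ∈ G) (s₁ ++ [z]) := by
              refine (hssplit ▸ hqs.2.2 : List.Chain' _ (s₁ ++ z :: s₂)).prefix ?_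
              exact ⟨s₂, by simp⟩
            have hcrev : List.Chain' (fun a b => (a, b) ∈ G) (z :: s₁.reverse) := by
              have h1 : List.Chain' (flip fun a b => (a, b) ∈ G) (s₁ ++ [z]) :=
                hcs₁.imp fun a b h => hG.1 a b h
              have h2 := List.isChain_reverse.mpr h1
              show List.IsChain _ _
              simpa [flip] using h2
            have : List.Chain' (fun a b => (a, b) ∈ G) ((x :: (r₁ ++ [z])) ++ s₁.reverse) := by
              show List.IsChain _ _
              rw [List.isChain_append]
              refine ⟨hchain_r, hcrev.tail, ?_⟩
              intro w hw v hv
              have hlz : (x :: (r₁ ++ [z])).getLast? = some z := by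
                rw [show x :: (r₁ ++ [z]) = (x :: r₁) ++ [z] by simp]
                exact List.getLast?_concat
              rw [hlz] at hw
              obtain rfl : z = w := by simpa using hw
              exact (List.isChain_cons.mp hcrev).1 v hv
            simpa [List.append_assoc] using this
          · -- closing edge
            have hgl : (x :: (r₁ ++ z :: s₁.reverse)).getLast? = some c := by
              cases s₁ with
              | nil =>
                obtain rfl : c = z := by
                  have := hssplit
                  simp only [List.nil_append] at this
                  exact (List.cons.injEq _ _ _ _ ▸ this).1
                rw [show x :: (r₁ ++ c :: List.reverse []) = (x :: r₁) ++ [c] by simp]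
                exact List.getLast?_concat
              | cons w s₁' =>
                obtain rfl : c = w := by
                  have := hssplit
                  simp only [List.cons_append] at this
                  exact (List.cons.injEq _ _ _ _ ▸ this).1
                rw [show x :: (r₁ ++ z :: (c :: s₁').reverse)
                    = (x :: (r₁ ++ z :: s₁'.reverse)) ++ [c] by simp]
                exact List.getLast?_concat
            have := (List.getLast?_eq_getLast (l := x :: (r₁ ++ z :: s₁.reverse))
              (List.cons_ne_nil _ _)).symm.trans hgl
            rw [Option.some.injEq] at this
            rw [this]
            exact hG.1 x c hxc

end Aux2

section Aux3

variable {X : Type*} {G : Set (X × X)}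

private lemma mem_head? {l : List X} {x : X} (h : l.head? = some x) : x ∈ l :=
  List.mem_of_mem_head? (by simp [h])

private lemma conn_symm (hG : IsGraph G) {x y : X} (h : Conn G x y) : Conn G y x :=
  by
    haveI : Std.Symm (fun a b : X => (a, b) ∈ G) := ⟨fun a b hab => hG.1 a b hab⟩
    exact Relation.ReflTransGen.symmetric.symm _ _ h

private lemma pointsTo_iff_mem (hG : IsGraph G) (hacyc : Acyclic G) {a b y : X} {p : List X}
    (hp : IsPathL G p) (hh : p.head? = some a) (hl : p.getLast? = some y) :
    PointsTo G (a, b) y ↔ b ∈ p := by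
  constructor
  · rintro ⟨q, hq, hqh, hql, hbq⟩
    rwa [path_unique hG hacyc q p hq hp (hqh.trans hh.symm) (hql.trans hl.symm)] at hbq
  · intro hb
    exact ⟨p, hp, hh, hl, hb⟩

private lemma pointsTo_snd (hG : IsGraph G) {a b : X} (he : (a, b) ∈ G) :
    PointsTo G (a, b) b :=
  ⟨[a, b], ⟨by simp, by simp [neG hG he], List.isChain_pair.mpr he⟩, by simp, by simp, by simp⟩

private lemma not_pointsTo_fst (hG : IsGraph G) (hacyc : Acyclic G) {a b : X}
    (he : (a, b) ∈ G) : ¬ PointsTo G (a, b) a := by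
  rw [pointsTo_iff_mem hG hacyc (path_singleton a) (by simp) (by simp)]
  simp
  exact (neG hG he).symm

private lemma pointsTo_conn {e : X × X} {y : X} (h : PointsTo G e y) : Conn G e.1 y := by
  obtain ⟨p, hp, hh, hl, -⟩ := h
  exact conn_of_path hp.2.2 hh hl

private lemma pointsTo_neg_iff (hG : IsGraph G) (hacyc : Acyclic G) {a b y : X}
    (he : (a, b) ∈ G) (hc : Conn G a y) :
    PointsTo G (b, a) y ↔ ¬ PointsTo G (a, b) y := by
  obtain ⟨p, hp, hh, hl⟩ := exists_path hG hc
  rw [pointsTo_iff_mem hG hacyc hp hh hl]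
  constructor
  · rintro ⟨q, hq, hqh, hql, haq⟩ hb
    obtain ⟨p₁, p₂, rfl⟩ := List.append_of_mem hb
    have hdrop : IsPathL G (b :: p₂) := path_drop hp
    have hql2 : (b :: p₂).getLast? = some y := by
      rw [← hl]
      exact (List.getLast?_append_of_ne_nil _ (by simp)).symm
    have hquniq := path_unique hG hacyc q (b :: p₂) hq hdrop (by simpa using hqh)
      (hql.trans hql2.symm)
    rw [hquniq] at haq
    cases p₁ with
    | nil =>
      have hba : b = a := by simpa using hh
      exact neG hG he hba.symm
    | cons w p₁' =>
      have hwa : w = a := by simpa using hh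
      subst hwa
      exact (List.disjoint_of_nodup_append hp.2.1) (by simp) haq
  · intro hb
    have hlast : (b :: p).getLast? = some y := by
      cases p with
      | nil => exact absurd rfl hp.1
      | cons w p' => rw [List.getLast?_cons_cons]; exact hl
    refine ⟨b :: p, ⟨by simp, List.nodup_cons.mpr ⟨hb, hp.2.1⟩, ?_⟩, by simp, hlast, ?_⟩
    · show List.IsChain _ _
      rw [List.isChain_cons]
      refine ⟨?_, hp.2.2⟩
      intro w hw
      rw [hh] at hw
      obtain rfl : a = w := by simpa using hw
      exact symmG hG he
    · exact List.mem_cons_of_mem _ (mem_head? hh)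

private lemma not_pointsTo_other (hG : IsGraph G) (hacyc : Acyclic G) {a b c d : X}
    (he : (a, b) ∈ G) (he' : (c, d) ∈ G) (hne : (a, b) ≠ (c, d))
    (hconn : Conn G a c) (hnp : ¬ PointsTo G (a, b) c) :
    ¬ PointsTo G (a, b) d := by
  obtain ⟨p, hp, hh, hl⟩ := exists_path hG hconn
  have hbp : b ∉ p := by rwa [pointsTo_iff_mem hG hacyc hp hh hl] at hnp
  by_cases hdp : d ∈ p
  · obtain ⟨p₁, p₂, rfl⟩ := List.append_of_mem hdp
    have hpre : (p₁ ++ [d]) <+: (p₁ ++ d :: p₂) := ⟨p₂, by simp⟩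
    rw [pointsTo_iff_mem hG hacyc (path_take hp)
      ((head?_of_prefix hpre (by simp)).symm.trans hh) (List.getLast?_concat)]
    intro hmem
    exact hbp (hpre.sublist.mem hmem)
  · have hnodup : (p ++ [d]).Nodup := by
      rw [List.nodup_append']
      refine ⟨hp.2.1, by simp, ?_⟩
      intro w hw hwd
      obtain rfl : w = d := by simpa using hwd
      exact hdp hw
    have hchain : (p ++ [d]).Chain' fun x y => (x, y) ∈ G := by
      show List.IsChain _ _
      rw [List.isChain_append]
      refine ⟨hp.2.2, by simp, ?_⟩
      intro w hw z hz
      rw [hl] at hw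
      obtain rfl : c = w := by simpa using hw
      obtain rfl : d = z := by simpa using hz
      exact he'
    have hpd : IsPathL G (p ++ [d]) := ⟨by simp, hnodup, hchain⟩
    rw [pointsTo_iff_mem hG hacyc hpd ((List.head?_append_of_ne_nil _ hp.1).trans hh)
      (List.getLast?_concat)]
    intro hmem
    have hbd : b = d := by
      rcases List.mem_append.mp hmem with h | h
      · exact absurd h hbp
      · simpa using h
    subst hbd
    apply hne
    have h1 : IsPathL G (b :: p) := by
      refine ⟨by simp, List.nodup_cons.mpr ⟨hdp, hp.2.1⟩, ?_⟩
      show List.IsChain _ _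
      rw [List.isChain_cons]
      refine ⟨?_, hp.2.2⟩
      intro w hw
      rw [hh] at hw
      obtain rfl : a = w := by simpa using hw
      exact symmG hG he
    have h2 : IsPathL G [b, c] := by
      refine ⟨by simp, by simp [(neG hG he').symm], ?_⟩
      show List.IsChain _ _
      simp only [List.isChain_cons_cons, List.isChain_singleton, and_true]
      exact symmG hG he'
    have hlast1 : (b :: p).getLast? = some c := by
      cases p with
      | nil => exact absurd rfl hp.1
      | cons w p' => rw [List.getLast?_cons_cons]; exact hl
    have huniq := path_unique hG hacyc (b :: p) [b, c] h1 h2 rfl (by simpa using hlast1)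
    have hp1 : p = [c] := by injection huniq
    rw [hp1] at hh
    obtain rfl : c = a := by simpa using hh
    rfl

private lemma key_prec (hG : IsGraph G) (hacyc : Acyclic G) {u v a b : X}
    (hf : (u, v) ∈ G) (he : (a, b) ∈ G)
    (hP : PointsTo G (u, v) a) (hnP : ¬ PointsTo G (a, b) u) :
    PointsTo G (b, a) v ∧ ¬ PointsTo G (v, u) b := by
  obtain ⟨pf, hpf, hpfh, hpfl, hvpf⟩ := hP
  have hr : IsPathL G pf.reverse := path_reverse hG hpf
  have hrh : pf.reverse.head? = some a := by rw [List.head?_reverse]; exact hpfl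
  have hrl : pf.reverse.getLast? = some u := by rw [List.getLast?_reverse]; exact hpfh
  have hbr : b ∉ pf.reverse := by rwa [pointsTo_iff_mem hG hacyc hr hrh hrl] at hnP
  have hvr : v ∈ pf.reverse := List.mem_reverse.mpr hvpf
  have hub : u ≠ b := fun h => hbr (h ▸ mem_getLast? hrl)
  obtain ⟨r₁, r₂, hsplit⟩ := List.append_of_mem hvr
  have hvu : v ≠ u := neG hG (symmG hG hf)
  have hr₂ne : r₂ ≠ [] := by
    rintro rfl
    rw [hsplit] at hrl
    exact hvu (by simpa using hrl)
  have hur₂ : u ∈ r₂ := by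
    rw [hsplit, show r₁ ++ v :: r₂ = (r₁ ++ [v]) ++ r₂ by simp,
      List.getLast?_append_of_ne_nil _ hr₂ne] at hrl
    exact mem_getLast? hrl
  have hnd : (r₁ ++ v :: r₂).Nodup := hsplit ▸ hr.2.1
  have hu_t : u ∉ r₁ ++ [v] := by
    intro h
    rcases List.mem_append.mp h with h | h
    · exact (List.disjoint_of_nodup_append hnd) h (List.mem_cons_of_mem _ hur₂)
    · have huv : u = v := by simpa using h
      exact hvu huv.symm
  have ht : IsPathL G (r₁ ++ [v]) := path_take (hsplit ▸ hr)
  have hpre : (r₁ ++ [v]) <+: (r₁ ++ v :: r₂) := ⟨r₂, by simp⟩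
  have hth : (r₁ ++ [v]).head? = some a :=
    (head?_of_prefix hpre (by simp)).symm.trans (hsplit ▸ hrh)
  have htl : (r₁ ++ [v]).getLast? = some v := List.getLast?_concat
  have hbt : b ∉ r₁ ++ [v] := fun h => hbr (hsplit ▸ hpre.sublist.mem h)
  constructor
  · rw [pointsTo_neg_iff hG hacyc he (conn_of_path ht.2.2 hth htl),
      pointsTo_iff_mem hG hacyc ht hth htl]
    exact hbt
  · have htr : IsPathL G ((r₁ ++ [v]).reverse) := path_reverse hG ht
    have hconc : IsPathL G ((r₁ ++ [v]).reverse ++ [b]) := by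
      refine ⟨by simp, ?_, ?_⟩
      · rw [List.nodup_append']
        refine ⟨htr.2.1, by simp, ?_⟩
        intro w hw hwb
        obtain rfl : w = b := by simpa using hwb
        exact hbt (List.mem_reverse.mp hw)
      · show List.IsChain _ _
        rw [List.isChain_append]
        refine ⟨htr.2.2, by simp, ?_⟩
        intro w hw z hz
        rw [List.getLast?_reverse, hth] at hw
        obtain rfl : a = w := by simpa using hw
        obtain rfl : b = z := by simpa using hz
        exact he
    have hch : ((r₁ ++ [v]).reverse ++ [b]).head? = some v := by
      rw [List.head?_append_of_ne_nil _ (by simp), List.head?_reverse, htl]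
    rw [pointsTo_iff_mem hG hacyc hconc hch (List.getLast?_concat)]
    intro hmem
    rcases List.mem_append.mp hmem with h | h
    · exact hu_t (List.mem_reverse.mp h)
    · exact hub (by simpa using h)

private lemma interferes_symm (hG : IsGraph G) {e e' : X × X}
    (h : Interferes G e e') : Interferes G e' e :=
  ⟨Ne.symm h.1, conn_symm hG h.2.1, h.2.2.2, h.2.2.1⟩

end Aux3

/-- If `S` and `T` are consistent and `≺`-downward-closed sets of directed edges of
an acyclic graph `G`, then so is `T ∪ (S ∖ (-T))`. -/
theorem union_sdiff_consistent {X : Type*}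
    (G : Set (X × X)) (hG : IsGraph G) (hacyc : Acyclic G)
    (S T : Set (X × X)) (hS : S ⊆ G) (hT : T ⊆ G)
    (hScons : Consistent G S) (hSclosed : PrecClosed G S)
    (hTcons : Consistent G T) (hTclosed : PrecClosed G T) :
    Consistent G (T ∪ (S \ {e | neg e ∈ T})) ∧
    PrecClosed G (T ∪ (S \ {e | neg e ∈ T})) := by
  have mixed : ∀ e ∈ T, ∀ e' ∈ S, neg e' ∉ T → ¬ Interferes G e e' := by
    rintro ⟨a, b⟩ heT ⟨c, d⟩ he'S hnegT ⟨hne, hconn, hnp, hnp'⟩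
    apply hnegT
    refine hTclosed (d, c) (a, b) ⟨?_, ?_⟩ heT
    · exact (pointsTo_neg_iff hG hacyc (hS he'S) (conn_symm hG hconn)).mpr hnp'
    · exact not_pointsTo_other hG hacyc (hT heT) (hS he'S) hne hconn hnp
  constructor
  · rintro e he e' he' hI
    rcases he with heT | ⟨heS, henT⟩ <;> rcases he' with he'T | ⟨he'S, he'nT⟩
    · exact hTcons e heT e' he'T hI
    · exact mixed e heT e' he'S he'nT hI
    · exact mixed e' he'T e heS henT (interferes_symm hG hI)
    · exact hScons e heS e' he'S hI
  · rintro f e hfe he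
    rcases he with heT | ⟨heS, henT⟩
    · exact Or.inl (hTclosed f e hfe heT)
    · have hfS : f ∈ S := hSclosed f e hfe heS
      by_cases hfT : neg f ∈ T
      · exfalso
        apply henT
        obtain ⟨u, v⟩ := f
        obtain ⟨a, b⟩ := e
        have hkd := key_prec hG hacyc (hS hfS) (hS heS) hfe.1 hfe.2
        exact hTclosed (b, a) (v, u) ⟨hkd.1, hkd.2⟩ hfT
      · exact Or.inr ⟨hfS, hfT⟩
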